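/- arXiv:1602.02733 — 4 statements merged into one kernel-verified Lean document; each statement's English description precedes it below -/
import Mathlib

section
/- Let n ∈ (0, 3/2) and suppose H ∈ C³((0,δ)) satisfies H(x)^{n−1} H'''(x) = −1 + x and H > 0 on (0,δ), together with the leading-order asymptotic H(x) = κ x² (1 + o(1)) as x ↘ 0 for some κ > 0. Then also H'(x) = 2κ x (1 + o(1)) and H''(x) = 2κ (1 + o(1)) as x ↘ 0. Consequently, setting F(s) := e^{−2s} H(e^s), the quintuple (e^{(4−2n)s}, e^{(3−2n)s}, F(s), (dF/ds)(s), (d²F/ds²)(s)) converges to p_κ := (0, 0, κ, 0, 0) as s → −∞. -/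
open Set Filter Real MeasureTheory intervalIntegral Topology

lemma exists_tendsto_aux {g g' : ℝ → ℝ} {b M r : ℝ} (hb : 0 < b) (hr : -1 < r)
    (hd : ∀ x ∈ Ioo (0:ℝ) b, HasDerivAt g (g' x) x)
    (hc : ContinuousOn g' (Ioo 0 b))
    (hbd : ∀ᶠ x in 𝓝[>] (0:ℝ), |g' x| ≤ M * x ^ r) :
    ∃ L, Tendsto g (𝓝[>] (0:ℝ)) (𝓝 L) := by
  rw [eventually_iff_exists_mem] at hbd
  obtain ⟨s, hs, hsbd⟩ := hbd
  rw [mem_nhdsGT_iff_exists_Ioo_subset] at hs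
  obtain ⟨u, hu, hus⟩ := hs
  set a : ℝ := min u b / 2 with ha_def
  have hu0 : (0:ℝ) < u := hu
  have ha0 : 0 < a := by positivity
  have hab : a < b := by
    have h1 : a < min u b := by
      have : 0 < min u b := lt_min hu0 hb
      linarith [this]
    exact lt_of_lt_of_le h1 (min_le_right _ _)
  have hau : a < u := by
    have h1 : a < min u b := by
      have : 0 < min u b := lt_min hu0 hb
      linarith [this]
    exact lt_of_lt_of_le h1 (min_le_left _ _)
  have hint : IntervalIntegrable g' volume 0 a := by
    rw [intervalIntegrable_iff_integrableOn_Ioc_of_le ha0.le]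
    have hmeas : AEStronglyMeasurable g' (volume.restrict (Ioc 0 a)) :=
      (hc.mono (fun x hx => ⟨hx.1, lt_of_le_of_lt hx.2 hab⟩)).aestronglyMeasurable
        measurableSet_Ioc
    have hdom : IntegrableOn (fun x : ℝ => M * x ^ r) (Ioc 0 a) volume := by
      have := (intervalIntegrable_rpow' hr (a := 0) (b := a)).const_mul M
      rwa [intervalIntegrable_iff_integrableOn_Ioc_of_le ha0.le] at this
    refine hdom.integrable.mono' hmeas ?_
    rw [ae_restrict_iff' measurableSet_Ioc]
    refine Filter.Eventually.of_forall fun x hx => ?_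
    have : x ∈ s := hus ⟨hx.1, lt_of_le_of_lt hx.2 hau⟩
    simpa [Real.norm_eq_abs] using hsbd x this
  refine ⟨g a - ∫ t in (0:ℝ)..a, g' t, ?_⟩
  have hP : Tendsto (fun x => ∫ t in (0:ℝ)..x, g' t) (𝓝[>] (0:ℝ)) (𝓝 0) := by
    have hcont := intervalIntegral.continuousOn_primitive_interval' hint
      (left_mem_uIcc (a := (0:ℝ)) (b := a))
    have h0 : (0:ℝ) ∈ uIcc (0:ℝ) a := left_mem_uIcc
    have h1 := (hcont 0 h0)
    rw [ContinuousWithinAt] at h1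
    rw [intervalIntegral.integral_same] at h1
    refine h1.mono_left ?_
    rw [← nhdsWithin_Ioc_eq_nhdsGT ha0]
    exact nhdsWithin_mono _ (by rw [uIcc_of_le ha0.le]; exact Ioc_subset_Icc_self)
  have key : ∀ x ∈ Ioo (0:ℝ) a,
      g x = (g a - ∫ t in (0:ℝ)..a, g' t) + ∫ t in (0:ℝ)..x, g' t := by
    intro x hx
    have hxa : x < a := hx.2
    have hsub : uIcc x a ⊆ Ioo 0 b := by
      rw [uIcc_of_le hxa.le]
      exact fun t ht => ⟨lt_of_lt_of_le hx.1 ht.1, lt_of_le_of_lt ht.2 hab⟩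
    have hftc : ∫ t in x..a, g' t = g a - g x :=
      intervalIntegral.integral_eq_sub_of_hasDerivAt
        (fun t ht => hd t (hsub ht))
        ((hc.mono (fun t ht => hsub ht)).intervalIntegrable)
    have hadd : (∫ t in (0:ℝ)..x, g' t) + ∫ t in x..a, g' t = ∫ t in (0:ℝ)..a, g' t :=
      intervalIntegral.integral_add_adjacent_intervals
        (hint.mono_set (by
          rw [uIcc_of_le ha0.le, uIcc_of_le hx.1.le]
          exact Icc_subset_Icc le_rfl hxa.le))
        (hint.mono_set (by
          rw [uIcc_of_le ha0.le, uIcc_of_le hxa.le]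
          exact Icc_subset_Icc hx.1.le le_rfl))
    linarith [hadd, hftc]
  have hmem : Ioo (0:ℝ) a ∈ 𝓝[>] (0:ℝ) := Ioo_mem_nhdsGT_of_mem ⟨le_refl 0, ha0⟩
  have h2 := (tendsto_const_nhds.add hP :
    Tendsto (fun x => (g a - ∫ t in (0:ℝ)..a, g' t) + ∫ t in (0:ℝ)..x, g' t)
      (𝓝[>] (0:ℝ)) (𝓝 ((g a - ∫ t in (0:ℝ)..a, g' t) + 0)))
  rw [add_zero] at h2
  exact h2.congr' (by filter_upwards [hmem] with x hx using (key x hx).symm)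

/-- If `H` solves the similarity ODE `H^{n-1} H''' = -1 + x` near the contact line with
`H > 0` and `H = κ x² (1 + o(1))` as `x ↘ 0`, then also `H' = 2κx(1+o(1))`,
`H'' = 2κ(1+o(1))`, and in the dynamical-systems coordinates `s = log x`, `F = e^{-2s}H(e^s)`,
the trajectory `(e^{(4-2n)s}, e^{(3-2n)s}, F, F', F'')` converges to `p_κ = (0,0,κ,0,0)`
as `s → -∞`. -/
theorem thinfilm_trajectory_converges (n κ δ : ℝ) (hn0 : 0 < n) (hn : n < 3 / 2)
    (hκ : 0 < κ) (hδ : 0 < δ) (H : ℝ → ℝ)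
    (hreg : ContDiffOn ℝ 3 H (Set.Ioo 0 δ))
    (hpos : ∀ x ∈ Set.Ioo (0:ℝ) δ, 0 < H x)
    (hode : ∀ x ∈ Set.Ioo (0:ℝ) δ, H x ^ (n - 1) * deriv^[3] H x = -1 + x)
    (hasym : Filter.Tendsto (fun x : ℝ => H x / x ^ 2)
      (nhdsWithin 0 (Set.Ioi 0)) (nhds κ)) :
    Filter.Tendsto (fun x : ℝ => deriv H x / x) (nhdsWithin 0 (Set.Ioi 0)) (nhds (2 * κ)) ∧
    Filter.Tendsto (fun x : ℝ => deriv (deriv H) x) (nhdsWithin 0 (Set.Ioi 0))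
      (nhds (2 * κ)) ∧
    Filter.Tendsto
      (fun s : ℝ =>
        (Real.exp ((4 - 2*n) * s), Real.exp ((3 - 2*n) * s),
          Real.exp (-2*s) * H (Real.exp s),
          deriv (fun t : ℝ => Real.exp (-2*t) * H (Real.exp t)) s,
          deriv (deriv (fun t : ℝ => Real.exp (-2*t) * H (Real.exp t))) s))
      Filter.atBot (nhds (0, 0, κ, 0, 0)) := by
  have hO : IsOpen (Ioo (0:ℝ) δ) := isOpen_Ioo
  have hd1 : ∀ x ∈ Ioo (0:ℝ) δ, HasDerivAt H (deriv H x) x := fun x hx =>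
    ((hreg.differentiableOn (by norm_num)).differentiableAt (hO.mem_nhds hx)).hasDerivAt
  have hreg1 : ContDiffOn ℝ 2 (deriv H) (Ioo 0 δ) :=
    hreg.deriv_of_isOpen hO (by norm_num)
  have hreg2 : ContDiffOn ℝ 1 (deriv (deriv H)) (Ioo 0 δ) :=
    hreg1.deriv_of_isOpen hO (by norm_num)
  have hd2 : ∀ x ∈ Ioo (0:ℝ) δ, HasDerivAt (deriv H) (deriv (deriv H) x) x := fun x hx =>
    ((hreg1.differentiableOn (by norm_num)).differentiableAt (hO.mem_nhds hx)).hasDerivAt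
  have hd3 : ∀ x ∈ Ioo (0:ℝ) δ,
      HasDerivAt (deriv (deriv H)) (deriv (deriv (deriv H)) x) x := fun x hx =>
    ((hreg2.differentiableOn (by norm_num)).differentiableAt (hO.mem_nhds hx)).hasDerivAt
  have hc3 : ContinuousOn (deriv (deriv (deriv H))) (Ioo 0 δ) :=
    hreg2.continuousOn_deriv_of_isOpen hO (le_refl 1)
  have hiter : deriv^[3] H = deriv (deriv (deriv H)) := rfl
  have hmemδ : Ioo (0:ℝ) δ ∈ 𝓝[>] (0:ℝ) := Ioo_mem_nhdsGT_of_mem ⟨le_refl 0, hδ⟩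
  -- rewrite ODE
  have hode' : ∀ x ∈ Ioo (0:ℝ) δ, deriv (deriv (deriv H)) x
      = (-1 + x) * (H x / x ^ 2) ^ (1 - n) * x ^ (2 - 2*n) := by
    intro x hx
    have hx0 : 0 < x := hx.1
    have hH : 0 < H x := hpos x hx
    have h1 := hode x hx
    rw [hiter] at h1
    have hpow : (0:ℝ) < H x ^ (n - 1) := Real.rpow_pos_of_pos hH _
    have hinv : H x ^ (1 - n) = (H x ^ (n - 1))⁻¹ := by
      rw [← Real.rpow_neg hH.le]; ring_nf
    have hHx : H x ^ (1 - n) = (H x / x ^ 2) ^ (1 - n) * x ^ (2 - 2*n) := by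
      have heq : H x = (H x / x ^ 2) * x ^ 2 := by field_simp
      calc H x ^ (1 - n) = ((H x / x ^ 2) * x ^ 2) ^ (1 - n) := by rw [← heq]
        _ = (H x / x ^ 2) ^ (1 - n) * (x ^ 2 : ℝ) ^ (1 - n) :=
            Real.mul_rpow (by positivity) (by positivity)
        _ = (H x / x ^ 2) ^ (1 - n) * x ^ (2 - 2*n) := by
            rw [← Real.rpow_natCast x 2, ← Real.rpow_mul hx0.le,
              show ((2:ℕ):ℝ) * (1 - n) = 2 - 2*n by push_cast; ring]
    have hD : deriv (deriv (deriv H)) x = (-1 + x) * H x ^ (1 - n) := by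
      have h2 : deriv (deriv (deriv H)) x = (-1 + x) / H x ^ (n - 1) := by
        rw [eq_div_iff hpow.ne']; linarith [h1]
      rw [h2, div_eq_mul_inv, ← hinv]
    rw [hD, hHx]; ring
  -- limit of the ratio H'''/x^(2-2n)
  have hrexp : (-1 : ℝ) < 2 - 2*n := by linarith
  have hratio : Tendsto (fun x => deriv (deriv (deriv H)) x / x ^ (2 - 2*n))
      (𝓝[>] (0:ℝ)) (𝓝 (-(κ ^ (1 - n)))) := by
    have hb : Tendsto (fun x : ℝ => (-1 + x) * (H x / x ^ 2) ^ (1 - n))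
        (𝓝[>] (0:ℝ)) (𝓝 ((-1 + 0) * κ ^ (1 - n))) := by
      refine Tendsto.mul ?_ (hasym.rpow_const (Or.inl hκ.ne')) 
      exact tendsto_const_nhds.add (tendsto_id.mono_right nhdsWithin_le_nhds)
    rw [show ((-1:ℝ) + 0) * κ ^ (1 - n) = -(κ ^ (1 - n)) by ring] at hb
    refine hb.congr' ?_
    filter_upwards [hmemδ] with x hx
    rw [hode' x hx]
    rw [mul_div_assoc, div_self (Real.rpow_pos_of_pos hx.1 _).ne', mul_one]
  -- limit of H''
  have hbd3 : ∀ᶠ x in 𝓝[>] (0:ℝ),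
      |deriv (deriv (deriv H)) x| ≤ (κ ^ (1 - n) + 1) * x ^ (2 - 2*n) := by
    have hlt : |(-(κ ^ (1 - n)))| < κ ^ (1 - n) + 1 := by
      rw [abs_neg, abs_of_pos (Real.rpow_pos_of_pos hκ _)]; linarith
    filter_upwards [hratio.abs.eventually_le_const hlt, self_mem_nhdsWithin] with x hle hx0
    have hxp : (0:ℝ) < x ^ (2 - 2*n) := Real.rpow_pos_of_pos hx0 _
    calc |deriv (deriv (deriv H)) x|
        = |deriv (deriv (deriv H)) x / x ^ (2 - 2*n)| * x ^ (2 - 2*n) := by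
          rw [abs_div, abs_of_pos hxp, div_mul_cancel₀ _ hxp.ne']
      _ ≤ (κ ^ (1 - n) + 1) * x ^ (2 - 2*n) := mul_le_mul_of_nonneg_right hle hxp.le
  obtain ⟨L2, hL2t⟩ := exists_tendsto_aux hδ hrexp hd3 hc3 hbd3
  -- limit of H'
  have hbd2 : ∀ᶠ x in 𝓝[>] (0:ℝ), |deriv (deriv H) x| ≤ (|L2| + 1) * x ^ (0:ℝ) := by
    filter_upwards [hL2t.abs.eventually_le_const (lt_add_one |L2|)] with x hle
    rw [Real.rpow_zero, mul_one]; exact hle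
  obtain ⟨L1, hL1t⟩ := exists_tendsto_aux hδ (by norm_num) hd2
    (hreg2.continuousOn) hbd2
  -- H → 0
  have hx2 : Tendsto (fun x : ℝ => x ^ 2) (𝓝[>] (0:ℝ)) (𝓝 0) := by
    have h : Tendsto (fun x : ℝ => x ^ 2) (𝓝[>] (0:ℝ)) (𝓝 ((0:ℝ) ^ 2)) :=
      ((continuous_pow 2).tendsto (0:ℝ)).mono_left nhdsWithin_le_nhds
    simpa using h
  have hH0 : Tendsto H (𝓝[>] (0:ℝ)) (𝓝 0) := by
    have h := hasym.mul hx2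
    rw [mul_zero] at h
    refine h.congr' ?_
    filter_upwards [self_mem_nhdsWithin] with x hx
    have hx0 : (x:ℝ) ≠ 0 := ne_of_gt hx
    field_simp
  have hxid : Tendsto (fun x : ℝ => x) (𝓝[>] (0:ℝ)) (𝓝 0) :=
    tendsto_id.mono_right nhdsWithin_le_nhds
  -- L1 = 0
  have hL1 : L1 = 0 := by
    have lhs : Tendsto (fun x => H x / x) (𝓝[>] (0:ℝ)) (𝓝 L1) := by
      refine HasDerivAt.lhopital_zero_nhdsGT (f' := deriv H) (g' := fun _ => 1)
        ?_ ?_ ?_ hH0 hxid ?_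
      · filter_upwards [hmemδ] with x hx using hd1 x hx
      · exact Filter.Eventually.of_forall fun x => hasDerivAt_id x
      · exact Filter.Eventually.of_forall fun _ => one_ne_zero
      · simpa using hL1t
    have rhs : Tendsto (fun x => H x / x) (𝓝[>] (0:ℝ)) (𝓝 0) := by
      have h := hasym.mul hxid
      rw [mul_zero] at h
      refine h.congr' ?_
      filter_upwards [self_mem_nhdsWithin] with x hx
      have hx0 : (x:ℝ) ≠ 0 := ne_of_gt hx
      field_simp
    exact tendsto_nhds_unique lhs rhs
  rw [hL1] at hL1t
  -- H'/x → L2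
  have h1x : Tendsto (fun x => deriv H x / x) (𝓝[>] (0:ℝ)) (𝓝 L2) := by
    refine HasDerivAt.lhopital_zero_nhdsGT (f' := deriv (deriv H)) (g' := fun _ => 1)
      ?_ ?_ ?_ hL1t hxid ?_
    · filter_upwards [hmemδ] with x hx using hd2 x hx
    · exact Filter.Eventually.of_forall fun x => hasDerivAt_id x
    · exact Filter.Eventually.of_forall fun _ => one_ne_zero
    · simpa using hL2t
  -- L2 = 2κ
  have hL2 : L2 = 2 * κ := by
    have lhs : Tendsto (fun x => H x / x ^ 2) (𝓝[>] (0:ℝ)) (𝓝 (L2 / 2)) := by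
      refine HasDerivAt.lhopital_zero_nhdsGT (f' := deriv H) (g' := fun x => 2 * x)
        ?_ ?_ ?_ hH0 hx2 ?_
      · filter_upwards [hmemδ] with x hx using hd1 x hx
      · refine Filter.Eventually.of_forall fun x => ?_
        simpa using hasDerivAt_pow 2 x
      · filter_upwards [self_mem_nhdsWithin] with x hx
        exact (mul_pos two_pos hx).ne'
      · refine (h1x.div_const 2).congr fun x => ?_
        rw [div_div, mul_comm]
    have := tendsto_nhds_unique hasym lhs
    linarith
  rw [hL2] at hL2t h1x
  refine ⟨h1x, hL2t, ?_⟩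
  -- Part 3: trajectory
  have hSmem : ∀ s : ℝ, s < Real.log δ → Real.exp s ∈ Ioo (0:ℝ) δ := fun s hs =>
    ⟨Real.exp_pos s, by rw [← Real.exp_log hδ]; exact Real.exp_lt_exp.mpr hs⟩
  have he1 : ∀ s : ℝ, HasDerivAt (fun t : ℝ => Real.exp (-2*t)) (Real.exp (-2*s) * (-2)) s := by
    intro s
    have h := (((hasDerivAt_id s).const_mul (-2 : ℝ)).exp :
      HasDerivAt (fun t : ℝ => Real.exp (-2*t)) (Real.exp (-2*s) * (-2 * 1)) s)
    simpa using h
  have he2 : ∀ s : ℝ, s < Real.log δ →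
      HasDerivAt (fun t : ℝ => H (Real.exp t)) (deriv H (Real.exp s) * Real.exp s) s :=
    fun s hs => (hd1 _ (hSmem s hs)).comp s (Real.hasDerivAt_exp s)
  have he4 : ∀ s : ℝ, s < Real.log δ →
      HasDerivAt (fun t : ℝ => deriv H (Real.exp t))
        (deriv (deriv H) (Real.exp s) * Real.exp s) s :=
    fun s hs => (hd2 _ (hSmem s hs)).comp s (Real.hasDerivAt_exp s)
  have hder1 : ∀ s : ℝ, s < Real.log δ →
      HasDerivAt (fun t : ℝ => Real.exp (-2*t) * H (Real.exp t))
        (Real.exp (-2*s) * (-2) * H (Real.exp s)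
          + Real.exp (-2*s) * (deriv H (Real.exp s) * Real.exp s)) s :=
    fun s hs => (he1 s).mul (he2 s hs)
  have hder2 : ∀ s : ℝ, s < Real.log δ →
      HasDerivAt (fun t : ℝ => Real.exp (-2*t) * (-2) * H (Real.exp t)
          + Real.exp (-2*t) * (deriv H (Real.exp t) * Real.exp t))
        ((Real.exp (-2*s) * (-2) * (-2) * H (Real.exp s)
            + Real.exp (-2*s) * (-2) * (deriv H (Real.exp s) * Real.exp s))
          + (Real.exp (-2*s) * (-2) * (deriv H (Real.exp s) * Real.exp s)
            + Real.exp (-2*s) * (deriv (deriv H) (Real.exp s) * Real.exp s * Real.exp s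
                + deriv H (Real.exp s) * Real.exp s))) s := by
    intro s hs
    have he3 : HasDerivAt (fun t : ℝ => deriv H (Real.exp t) * Real.exp t)
        (deriv (deriv H) (Real.exp s) * Real.exp s * Real.exp s
          + deriv H (Real.exp s) * Real.exp s) s :=
      (he4 s hs).mul (Real.hasDerivAt_exp s)
    exact (((he1 s).mul_const (-2:ℝ)).mul (he2 s hs)).add ((he1 s).mul he3)
  have hEq1 : ∀ s : ℝ, s < Real.log δ →
      deriv (fun t : ℝ => Real.exp (-2*t) * H (Real.exp t)) s
        = Real.exp (-2*s) * (-2) * H (Real.exp s)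
          + Real.exp (-2*s) * (deriv H (Real.exp s) * Real.exp s) :=
    fun s hs => (hder1 s hs).deriv
  have hEq2 : ∀ s : ℝ, s < Real.log δ →
      deriv (deriv (fun t : ℝ => Real.exp (-2*t) * H (Real.exp t))) s
        = (Real.exp (-2*s) * (-2) * (-2) * H (Real.exp s)
            + Real.exp (-2*s) * (-2) * (deriv H (Real.exp s) * Real.exp s))
          + (Real.exp (-2*s) * (-2) * (deriv H (Real.exp s) * Real.exp s)
            + Real.exp (-2*s) * (deriv (deriv H) (Real.exp s) * Real.exp s * Real.exp s
                + deriv H (Real.exp s) * Real.exp s)) := by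
    intro s hs
    have h1 : deriv (fun t : ℝ => Real.exp (-2*t) * H (Real.exp t))
        =ᶠ[𝓝 s] fun t => Real.exp (-2*t) * (-2) * H (Real.exp t)
          + Real.exp (-2*t) * (deriv H (Real.exp t) * Real.exp t) := by
      filter_upwards [Iio_mem_nhds hs] with t ht using hEq1 t ht
    rw [h1.deriv_eq]
    exact (hder2 s hs).deriv
  have hexp : Tendsto Real.exp atBot (𝓝[>] (0:ℝ)) := Real.tendsto_exp_atBot_nhdsGT
  have hcancel : ∀ s : ℝ, Real.exp (-2*s) * (Real.exp s * Real.exp s) = 1 := by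
    intro s
    rw [← Real.exp_add, ← Real.exp_add]
    rw [show -2*s + (s + s) = 0 by ring, Real.exp_zero]
  have hA : Tendsto (fun s : ℝ => Real.exp (-2*s) * H (Real.exp s)) atBot (𝓝 κ) := by
    refine (hasym.comp hexp).congr fun s => ?_
    show H (Real.exp s) / Real.exp s ^ 2 = Real.exp (-2*s) * H (Real.exp s)
    rw [sq, div_eq_iff (mul_ne_zero (Real.exp_ne_zero s) (Real.exp_ne_zero s))]
    linear_combination -H (Real.exp s) * hcancel s
  have hB : Tendsto (fun s : ℝ => Real.exp (-2*s) * (deriv H (Real.exp s) * Real.exp s))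
      atBot (𝓝 (2 * κ)) := by
    refine (h1x.comp hexp).congr fun s => ?_
    show deriv H (Real.exp s) / Real.exp s = _
    rw [div_eq_iff (Real.exp_ne_zero s)]
    linear_combination -deriv H (Real.exp s) * hcancel s
  have hC : Tendsto (fun s : ℝ => deriv (deriv H) (Real.exp s)) atBot (𝓝 (2 * κ)) :=
    hL2t.comp hexp
  have hW : Tendsto (fun s : ℝ =>
      Real.exp (-2*s) * (deriv (deriv H) (Real.exp s) * Real.exp s * Real.exp s))
      atBot (𝓝 (2 * κ)) := by
    refine hC.congr fun s => ?_
    linear_combination -deriv (deriv H) (Real.exp s) * hcancel s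
  have tD1 : Tendsto (fun s : ℝ => Real.exp (-2*s) * (-2) * H (Real.exp s)
      + Real.exp (-2*s) * (deriv H (Real.exp s) * Real.exp s)) atBot (𝓝 0) := by
    have h := (hA.mul_const (-2:ℝ)).add hB
    rw [show κ * (-2) + 2 * κ = 0 by ring] at h
    exact h.congr fun s => by ring
  have tD2 : Tendsto (fun s : ℝ =>
      (Real.exp (-2*s) * (-2) * (-2) * H (Real.exp s)
        + Real.exp (-2*s) * (-2) * (deriv H (Real.exp s) * Real.exp s))
      + (Real.exp (-2*s) * (-2) * (deriv H (Real.exp s) * Real.exp s)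
        + Real.exp (-2*s) * (deriv (deriv H) (Real.exp s) * Real.exp s * Real.exp s
            + deriv H (Real.exp s) * Real.exp s))) atBot (𝓝 0) := by
    have h := (hA.mul_const (4:ℝ)).add ((hB.mul_const (-3:ℝ)).add hW)
    rw [show κ * 4 + (2 * κ * (-3) + 2 * κ) = 0 by ring] at h
    exact h.congr fun s => by ring
  have hev : ∀ᶠ s : ℝ in atBot, s < Real.log δ := eventually_lt_atBot (Real.log δ)
  have cF1 : Tendsto (deriv (fun t : ℝ => Real.exp (-2*t) * H (Real.exp t))) atBot (𝓝 0) :=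
    tD1.congr' (by filter_upwards [hev] with s hs using (hEq1 s hs).symm)
  have cF2 : Tendsto (deriv (deriv (fun t : ℝ => Real.exp (-2*t) * H (Real.exp t))))
      atBot (𝓝 0) :=
    tD2.congr' (by filter_upwards [hev] with s hs using (hEq2 s hs).symm)
  have c1 : Tendsto (fun s : ℝ => Real.exp ((4 - 2*n) * s)) atBot (𝓝 0) :=
    Real.tendsto_exp_atBot.comp
      ((tendsto_const_mul_atBot_of_pos (by linarith : (0:ℝ) < 4 - 2*n)).mpr tendsto_id)
  have c2 : Tendsto (fun s : ℝ => Real.exp ((3 - 2*n) * s)) atBot (𝓝 0) :=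
    Real.tendsto_exp_atBot.comp
      ((tendsto_const_mul_atBot_of_pos (by linarith : (0:ℝ) < 3 - 2*n)).mpr tendsto_id)
  exact c1.prodMk_nhds (c2.prodMk_nhds (hA.prodMk_nhds (cF1.prodMk_nhds cF2)))
end

section
/- Let n ∈ (0,3), and for n ≠ 2 suppose additionally θ > 0 so that θ^{1−n} is defined. The tangent space at p_θ = (0,0,θ,0,0) to the unstable invariant set of system (S̃) — namely, the (generalized) eigenspace of the Jacobian Ã (rows (1,0,0,0,0), (0,3−n,0,0,0), (0,0,0,1,0), (0,0,0,0,1), (0,−θ^{1−n},0,1,0)) corresponding to the eigenvalues with positive real part, translated to pass through p_θ — is exactly the three-dimensional affine subspace of ℝ⁵ given by the two equations F′ = −θ^{1−n} x₂/((n−3)(n−4)) + F − θ and F″ = θ^{1−n} x₂/(n−3) + F − θ. This holds both for n ≠ 2 (where à is diagonalizable on this eigenspace) and for n = 2 (where the generalized eigenspace of the triple eigenvalue 1 is used). -/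
open Matrix

noncomputable def Atil (n θ : ℝ) : Matrix (Fin 5) (Fin 5) ℝ :=
  !![1, 0,            0, 0, 0;
     0, 3 - n,        0, 0, 0;
     0, 0,            0, 1, 0;
     0, 0,            0, 0, 1;
     0, -θ ^ (1 - n), 0, 1, 0]

lemma Atil_apply (n θ : ℝ) (x : Fin 5 → ℝ) :
    Matrix.toLin' (Atil n θ) x =
      ![x 0, (3 - n) * x 1, x 3, x 4, -θ ^ (1 - n) * x 1 + x 3] := by
  funext i
  fin_cases i <;>
    simp [Atil, Matrix.toLin'_apply, Matrix.mulVec, dotProduct,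
      Fin.sum_univ_five]

lemma ann_aux {f : (Fin 5 → ℝ) →ₗ[ℝ] (Fin 5 → ℝ)} {ℓ : (Fin 5 → ℝ) → ℝ} {lam ν : ℝ}
    (h0 : ℓ 0 = 0) (hstep : ∀ x, ℓ ((f - lam • 1) x) = (ν - lam) * ℓ x)
    (hne : ν ≠ lam) {z : Fin 5 → ℝ}
    (hz : z ∈ Module.End.maxGenEigenspace f lam) : ℓ z = 0 := by
  obtain ⟨k, hk⟩ := (Module.End.mem_maxGenEigenspace f lam z).mp hz
  have key : ∀ (m : ℕ) (x : Fin 5 → ℝ),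
      ℓ (((f - lam • 1) ^ m) x) = (ν - lam) ^ m * ℓ x := by
    intro m
    induction m with
    | zero => intro x; simp
    | succ m ih =>
      intro x
      rw [pow_succ']
      have : ((f - lam • 1) * (f - lam • 1) ^ m) x
          = (f - lam • 1) (((f - lam • 1) ^ m) x) := rfl
      rw [this, hstep, ih, pow_succ']
      ring
  have h := key k z
  rw [hk, h0] at h
  have hpow : (ν - lam) ^ k ≠ 0 := pow_ne_zero _ (sub_ne_zero.mpr hne)
  exact (mul_eq_zero.mp h.symm).resolve_left hpow


lemma finsucc3 : Fin.succ (2 : Fin 4) = (3 : Fin 5) := rfl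
lemma finsucc4 : Fin.succ (Fin.succ (2 : Fin 3)) = (4 : Fin 5) := rfl
lemma finsucc2 : Fin.succ (1 : Fin 4) = (2 : Fin 5) := rfl
lemma finsucc2' : Fin.succ (Fin.succ (0 : Fin 3)) = (2 : Fin 5) := rfl

set_option maxHeartbeats 1000000 in
/-- The unstable (generalized) eigenspace of `Ã` — the sum of the generalized eigenspaces
for the eigenvalues `1` and `3-n` with positive real part — translated to pass through
`p_θ = (0,0,θ,0,0)`, is exactly the affine subspace of `ℝ⁵` (coordinates
`(x₁,x₂,F,F′,F″) = (y 0, y 1, y 2, y 3, y 4)`) cut out by the two equations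
`F′ = -θ^{1-n} x₂/((n-3)(n-4)) + F - θ` and `F″ = θ^{1-n} x₂/(n-3) + F - θ`. -/
theorem tilde_unstable_eigenspace (n θ : ℝ) (hn0 : 0 < n) (hn3 : n < 3) (hθ : 0 < θ) :
    ∀ y : Fin 5 → ℝ,
      (y - ![0, 0, θ, 0, 0]) ∈
        (Module.End.maxGenEigenspace (Matrix.toLin' (Atil n θ)) 1 ⊔
          Module.End.maxGenEigenspace (Matrix.toLin' (Atil n θ)) (3 - n)) ↔
      (y 3 = -θ ^ (1 - n) * y 1 / ((n - 3) * (n - 4)) + y 2 - θ ∧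
        y 4 = θ ^ (1 - n) * y 1 / (n - 3) + y 2 - θ) := by
  intro y
  set c : ℝ := θ ^ (1 - n) with hc
  set f := Matrix.toLin' (Atil n θ) with hf
  have hn3' : n - 3 ≠ 0 := by intro h; linarith [sub_eq_zero.mp h]
  have hn4' : n - 4 ≠ 0 := by intro h; linarith [sub_eq_zero.mp h]
  set z : Fin 5 → ℝ := y - ![0, 0, θ, 0, 0] with hzdef
  have hz1 : z 1 = y 1 := by simp [hzdef, Matrix.vecHead, Matrix.vecTail, finsucc2, finsucc2', finsucc3, finsucc4]
  have hz2 : z 2 = y 2 - θ := by simp [hzdef, Matrix.vecHead, Matrix.vecTail, finsucc2, finsucc2', finsucc3, finsucc4]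
  have hz3 : z 3 = y 3 := by simp [hzdef, Matrix.vecHead, Matrix.vecTail, finsucc2, finsucc2', finsucc3, finsucc4]
  have hz4 : z 4 = y 4 := by simp [hzdef, Matrix.vecHead, Matrix.vecTail, finsucc2, finsucc2', finsucc3, finsucc4]
  constructor
  · -- forward
    intro hmem
    set ℓ0 : (Fin 5 → ℝ) → ℝ := fun x => c * x 1 + (n - 3) * x 2 + (3 - n) * x 4 with hl0
    set ℓ1 : (Fin 5 → ℝ) → ℝ := fun x => c * x 1 + (n - 4) * x 3 + (4 - n) * x 4 with hl1
    have hstep0 : ∀ (lam : ℝ) (x : Fin 5 → ℝ), ℓ0 ((f - lam • 1) x) = (0 - lam) * ℓ0 x := by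
      intro lam x
      have h : (f - lam • 1) x = f x - lam • x := rfl
      rw [h, hf, Atil_apply]
      simp [hl0, Matrix.vecHead, Matrix.vecTail, finsucc2, finsucc2', finsucc3, finsucc4]
      ring
    have hstep1 : ∀ (lam : ℝ) (x : Fin 5 → ℝ), ℓ1 ((f - lam • 1) x) = (-1 - lam) * ℓ1 x := by
      intro lam x
      have h : (f - lam • 1) x = f x - lam • x := rfl
      rw [h, hf, Atil_apply]
      simp [hl1, Matrix.vecHead, Matrix.vecTail, finsucc2, finsucc2', finsucc3, finsucc4]
      ring
    have hz00 : ℓ0 (0 : Fin 5 → ℝ) = 0 := by simp [hl0]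
    have hz10 : ℓ1 (0 : Fin 5 → ℝ) = 0 := by simp [hl1]
    obtain ⟨a, ha, b, hb, hab⟩ := Submodule.mem_sup.mp hmem
    have hadd0 : ℓ0 z = ℓ0 a + ℓ0 b := by rw [← hab]; simp [hl0]; ring
    have hadd1 : ℓ1 z = ℓ1 a + ℓ1 b := by rw [← hab]; simp [hl1]; ring
    have h0a : ℓ0 a = 0 := ann_aux hz00 (hstep0 1) (by norm_num) ha
    have h0b : ℓ0 b = 0 := ann_aux hz00 (hstep0 (3 - n))
      (by intro h; exact hn3' (by linarith [h])) hb
    have h1a : ℓ1 a = 0 := ann_aux hz10 (hstep1 1) (by norm_num) ha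
    have h1b : ℓ1 b = 0 := ann_aux hz10 (hstep1 (3 - n))
      (by intro h; exact hn4' (by linarith [h])) hb
    have e0 : c * z 1 + (n - 3) * z 2 + (3 - n) * z 4 = 0 := by
      have h := hadd0; rw [h0a, h0b] at h; simpa [hl0] using h
    have e1 : c * z 1 + (n - 4) * z 3 + (4 - n) * z 4 = 0 := by
      have h := hadd1; rw [h1a, h1b] at h; simpa [hl1] using h
    simp only [hz1, hz2, hz3, hz4] at e0 e1
    constructor
    · field_simp
      linear_combination (n - 3) * e1 - (n - 4) * e0
    · field_simp
      linear_combination -e0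
  · -- reverse
    rintro ⟨h3, h4⟩
    set u : Fin 5 → ℝ := ![0, 0, 1, 1, 1] with hu
    set e₀ : Fin 5 → ℝ := ![1, 0, 0, 0, 0] with he₀
    set w : Fin 5 → ℝ := ![0, 1, 0, -c / ((n - 3) * (n - 4)), c / (n - 3)] with hw
    have hE1e : e₀ ∈ Module.End.maxGenEigenspace f 1 := by
      rw [Module.End.mem_maxGenEigenspace]
      refine ⟨1, ?_⟩
      rw [pow_one, LinearMap.sub_apply, LinearMap.smul_apply, Module.End.one_apply,
        hf, Atil_apply]
      funext i
      fin_cases i <;> simp [he₀, Matrix.vecHead, Matrix.vecTail, finsucc2, finsucc2', finsucc3, finsucc4]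
    have hfu : (f - (1 : ℝ) • (1 : Module.End ℝ (Fin 5 → ℝ))) u = 0 := by
      rw [LinearMap.sub_apply, LinearMap.smul_apply, Module.End.one_apply, hf, Atil_apply]
      funext i
      fin_cases i <;> simp [hu, Matrix.vecHead, Matrix.vecTail, finsucc2, finsucc2', finsucc3, finsucc4]
    have hE1u : u ∈ Module.End.maxGenEigenspace f 1 := by
      rw [Module.End.mem_maxGenEigenspace]
      exact ⟨1, by rw [pow_one]; exact hfu⟩
    have hwmem : w ∈ (Module.End.maxGenEigenspace f 1 ⊔
        Module.End.maxGenEigenspace f (3 - n)) := by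
      by_cases hn2 : n = 2
      · subst hn2
        apply Submodule.mem_sup_left
        rw [Module.End.mem_maxGenEigenspace]
        refine ⟨2, ?_⟩
        have hstep : (f - (1 : ℝ) • (1 : Module.End ℝ (Fin 5 → ℝ))) w = (-c / 2) • u := by
          rw [LinearMap.sub_apply, LinearMap.smul_apply, Module.End.one_apply, hf, Atil_apply]
          funext i
          fin_cases i <;> simp [hw, hu, Matrix.vecHead, Matrix.vecTail, finsucc2, finsucc2', finsucc3, finsucc4] <;> ring
        rw [show (2:ℕ) = 1 + 1 from rfl, pow_succ, pow_one, Module.End.mul_apply, hstep, _root_.map_smul, hfu, smul_zero]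
      · have hn2' : n - 2 ≠ 0 := sub_ne_zero.mpr hn2
        set a : ℝ := c / ((n - 3) * (n - 4) * (n - 2)) with ha
        have hvmem : (w + a • u) ∈ Module.End.maxGenEigenspace f (3 - n) := by
          rw [Module.End.mem_maxGenEigenspace]
          refine ⟨1, ?_⟩
          rw [pow_one, LinearMap.sub_apply, LinearMap.smul_apply, Module.End.one_apply,
            hf, Atil_apply]
          funext i
          fin_cases i <;>
            simp [hw, hu, ha, Matrix.vecHead, Matrix.vecTail, finsucc2, finsucc2', finsucc3, finsucc4] <;>
            field_simp <;> ring
        have hws : w = (w + a • u) + (-a) • u := by rw [neg_smul, add_neg_cancel_right]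
        rw [hws]
        exact Submodule.add_mem _ (Submodule.mem_sup_right hvmem)
          (Submodule.mem_sup_left (Submodule.smul_mem _ _ hE1u))
    have hdecomp : z = y 0 • e₀ + (y 2 - θ) • u + y 1 • w := by
      funext i
      fin_cases i <;>
        simp [hzdef, he₀, hu, hw, Matrix.vecHead, Matrix.vecTail, finsucc2, finsucc2', finsucc3, finsucc4] <;>
        (first | (rw [h3]; ring) | (rw [h4]; ring) | ring)
    rw [hdecomp]
    refine Submodule.add_mem _ (Submodule.add_mem _ ?_ ?_) ?_
    · exact Submodule.smul_mem _ _ (Submodule.mem_sup_left hE1e)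
    · exact Submodule.smul_mem _ _ (Submodule.mem_sup_left hE1u)
    · exact Submodule.smul_mem _ _ hwmem
end

section
/- Let n ∈ (0,3). There exists a multi-index q = (q₁,q₂,q₃) ∈ ℕ₀³ with q₁ + q₂ + q₃ ≥ 2 satisfying the resonance equation q₁ + (3−n) q₂ + q₃ = 1 if and only if n = 3 − 1/m for some integer m ≥ 2; in that case the unique such multi-index is q = (0, m, 0). Moreover, for the resonance equation with target eigenvalue 3−n, i.e. q₁ + (3−n) q₂ + q₃ = 3−n with q₁ + q₂ + q₃ ≥ 2, no solution exists with q₂ ≥ 1. -/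
/-- Classification of Poincaré–Dulac resonances `q^⊤ Λ̃ = λ̃_k`, `|q| ≥ 2`, for the
eigenvalue vector `Λ̃ = (1, 3-n, 1)` of the flow on the unstable manifold, `n ∈ (0,3)`:
a resonance with target eigenvalue `1` exists iff `n = 3 - 1/m` for some integer `m ≥ 2`,
in which case the unique resonant multi-index is `q = (0, m, 0)`; and the resonance
equation with target eigenvalue `3-n` has no solution with `q₂ ≥ 1`. -/
theorem resonance_classification (n : ℝ) (hn0 : 0 < n) (hn3 : n < 3) :
    ((∃ q : ℕ × ℕ × ℕ, 2 ≤ q.1 + q.2.1 + q.2.2 ∧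
        (q.1 : ℝ) + (3 - n) * (q.2.1 : ℝ) + (q.2.2 : ℝ) = 1) ↔
      (∃ m : ℕ, 2 ≤ m ∧ n = 3 - 1 / (m : ℝ))) ∧
    (∀ m : ℕ, 2 ≤ m → n = 3 - 1 / (m : ℝ) →
      ∀ q : ℕ × ℕ × ℕ, 2 ≤ q.1 + q.2.1 + q.2.2 →
        (q.1 : ℝ) + (3 - n) * (q.2.1 : ℝ) + (q.2.2 : ℝ) = 1 → q = (0, m, 0)) ∧
    (∀ q : ℕ × ℕ × ℕ, 2 ≤ q.1 + q.2.1 + q.2.2 → 1 ≤ q.2.1 →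
      (q.1 : ℝ) + (3 - n) * (q.2.1 : ℝ) + (q.2.2 : ℝ) ≠ 3 - n) := by
  have ha : (0:ℝ) < 3 - n := by linarith
  have key : ∀ q : ℕ × ℕ × ℕ, 2 ≤ q.1 + q.2.1 + q.2.2 →
      (q.1 : ℝ) + (3 - n) * (q.2.1 : ℝ) + (q.2.2 : ℝ) = 1 →
      q.1 = 0 ∧ q.2.2 = 0 ∧ (3 - n) * (q.2.1 : ℝ) = 1 ∧ 2 ≤ q.2.1 := by
    rintro ⟨a, b, c⟩ hsum heq
    simp only at heq hsum ⊢
    rcases Nat.eq_zero_or_pos b with hb | hb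
    · subst hb
      have : ((a + c : ℕ) : ℝ) = 1 := by push_cast; push_cast at heq; linarith
      have : a + c = 1 := by exact_mod_cast this
      omega
    · have hb1 : (1:ℝ) ≤ (b:ℝ) := by exact_mod_cast hb
      have h1 : ((a + c : ℕ) : ℝ) < 1 := by push_cast; nlinarith
      have h2 : a + c < 1 := by exact_mod_cast h1
      have ha0 : a = 0 := by omega
      have hc0 : c = 0 := by omega
      subst ha0; subst hc0
      refine ⟨rfl, rfl, by push_cast at heq; linarith, by omega⟩
  refine ⟨⟨?_, ?_⟩, ?_, ?_⟩
  · rintro ⟨q, hsum, heq⟩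
    obtain ⟨-, -, hmul, hb2⟩ := key q hsum heq
    refine ⟨q.2.1, hb2, ?_⟩
    have hbpos : (0:ℝ) < (q.2.1 : ℝ) := by exact_mod_cast Nat.lt_of_lt_of_le Nat.zero_lt_two hb2
    field_simp
    nlinarith
  · rintro ⟨m, hm, rfl⟩
    refine ⟨(0, m, 0), by simpa using hm, ?_⟩
    have hmpos : (0:ℝ) < (m : ℝ) := by exact_mod_cast Nat.lt_of_lt_of_le Nat.zero_lt_two hm
    push_cast
    field_simp
    ring
  · rintro m hm rfl q hsum heq
    obtain ⟨ha0, hc0, hmul, -⟩ := key q hsum heq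
    have hmpos : (0:ℝ) < (m : ℝ) := by exact_mod_cast Nat.lt_of_lt_of_le Nat.zero_lt_two hm
    field_simp at hmul
    have hb : q.2.1 = m := by
      have h' : (q.2.1 : ℝ) = m := by ring_nf at hmul; linarith
      exact_mod_cast h'
    obtain ⟨a, b, c⟩ := q
    simp only at ha0 hc0 hb
    simp [ha0, hc0, hb]
  · rintro ⟨a, b, c⟩ hsum hb heq
    simp only at heq hsum hb
    rcases Nat.lt_or_ge b 2 with h2 | h2
    · have hb1 : b = 1 := by omega
      subst hb1
      have : ((a + c : ℕ) : ℝ) = 0 := by push_cast; push_cast at heq; linarith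
      have : a + c = 0 := by exact_mod_cast this
      omega
    · have hb2 : (2:ℝ) ≤ (b:ℝ) := by exact_mod_cast h2
      have ha' : (0:ℝ) ≤ (a:ℝ) := by positivity
      have hc' : (0:ℝ) ≤ (c:ℝ) := by positivity
      nlinarith
end

section
/- Let n ∈ (0, 3/2) and let H be the solution of the similarity ODE H^{n−1}H''' = −1 + x on an interval (0, x₀) with H > 0, H(0) = 0, H'(0) = 0, and leading-order asymptotic H(x) = κ x²(1 + o(1)) as x ↘ 0 for some κ > 0. Then there is a constant C > 0 depending only on n such that, as x ↘ 0, H(x) = κ x² (1 + R₀(x)), H'(x) = 2κ x (1 + R₁(x)), and H''(x) = 2κ (1 + R₂(x)), where |R_i(x)| ≤ C (κ^{−n} x^{3−2n} + κ^{−n} x^{4−2n}) for i = 0, 1, 2 and all sufficiently small x > 0. -/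
open Set Filter MeasureTheory intervalIntegral

lemma my_ftc_split (f g : ℝ → ℝ) (a x₀ : ℝ) (hax : a < x₀)
    (hd : ∀ x ∈ Set.Ioo (0:ℝ) x₀, HasDerivAt f (g x) x)
    (hcont : ContinuousOn g (Set.Ioo 0 x₀))
    (hint : ∀ t ∈ Set.Ioc (0:ℝ) a, IntervalIntegrable g volume 0 t) :
    ∀ t ∈ Set.Ioc (0:ℝ) a, f t = (f a - ∫ s in (0:ℝ)..a, g s) + ∫ s in (0:ℝ)..t, g s := by
  intro t ht
  have hsub : Set.uIcc t a ⊆ Set.Ioo (0:ℝ) x₀ := by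
    rw [uIcc_of_le ht.2]
    exact fun x hx => ⟨lt_of_lt_of_le ht.1 hx.1, lt_of_le_of_lt hx.2 hax⟩
  have hta : IntervalIntegrable g volume t a := (hcont.mono hsub).intervalIntegrable
  have h1 : ∫ s in t..a, g s = f a - f t :=
    integral_eq_sub_of_hasDerivAt (fun x hx => hd x (hsub hx)) hta
  have h2 := integral_add_adjacent_intervals (hint t ht) hta
  linarith

lemma my_int_bound (f : ℝ → ℝ) (K q t : ℝ) (hq : (-1:ℝ) < q) (ht : 0 < t) (hK : 0 ≤ K)
    (hf : ∀ s ∈ Set.Ioc (0:ℝ) t, |f s| ≤ K * s ^ q) :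
    |∫ s in (0:ℝ)..t, f s| ≤ K * t ^ (q + 1) / (q + 1) := by
  have hq1 : 0 < q + 1 := by linarith
  have hb : IntervalIntegrable (fun s : ℝ => K * s ^ q) volume 0 t :=
    (intervalIntegrable_rpow' hq).const_mul K
  have hae : ∀ᵐ s ∂volume.restrict (Set.uIoc (0:ℝ) t), ‖f s‖ ≤ K * s ^ q := by
    rw [uIoc_of_le ht.le]
    exact (ae_restrict_iff' measurableSet_Ioc).mpr (ae_of_all _ fun s hs => hf s hs)
  have h : ‖∫ s in (0:ℝ)..t, f s‖ ≤ |∫ s in (0:ℝ)..t, K * s ^ q| :=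
    le_trans (intervalIntegral.norm_integral_le_of_norm_le ht.le (ae_of_all _ fun s hs => hf s hs) hb)
      (le_abs_self _)
  have hcomp : (∫ s in (0:ℝ)..t, K * s ^ q) = K * t ^ (q + 1) / (q + 1) := by
    rw [intervalIntegral.integral_const_mul, integral_rpow (Or.inl hq), Real.zero_rpow (by linarith : q + 1 ≠ 0)]
    ring
  rw [hcomp] at h
  have habs : |K * t ^ (q+1) / (q+1)| = K * t ^ (q+1) / (q+1) := by
    have h0 := Real.rpow_nonneg ht.le (q+1)
    exact abs_of_nonneg (by positivity)
  rw [habs] at h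
  exact h

lemma my_div_bound (y d R : ℝ) (hd : 0 < d) (h : |y - d| ≤ R * d) : |y / d - 1| ≤ R := by
  have he : y/d - 1 = (y-d)/d := by field_simp
  rw [he, abs_div, abs_of_pos hd, div_le_iff₀ hd]
  exact h

set_option maxHeartbeats 2000000 in
/-- Corollary: if `H` solves `H^{n-1}H''' = -1 + x` near the contact line with zero
contact angle and `H = κ x²(1 + o(1))` as `x ↘ 0`, then there is `C > 0` depending only
on `n` such that `H = κx²(1 + R₀)`, `H' = 2κx(1 + R₁)`, `H'' = 2κ(1 + R₂)` with
`|R_i(x)| ≤ C (κ^{-n} x^{3-2n} + κ^{-n} x^{4-2n})` for all sufficiently small `x > 0`. -/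
theorem contact_line_expansion_bounds (n : ℝ) (hn0 : 0 < n) (hn : n < 3 / 2) :
    ∃ C : ℝ, 0 < C ∧
      ∀ (H : ℝ → ℝ) (x₀ κ : ℝ), 0 < x₀ → 0 < κ →
        ContDiffOn ℝ 3 H (Set.Ioo 0 x₀) →
        (∀ x ∈ Set.Ioo (0:ℝ) x₀, 0 < H x) →
        (∀ x ∈ Set.Ioo (0:ℝ) x₀, H x ^ (n - 1) * deriv^[3] H x = -1 + x) →
        H 0 = 0 →
        derivWithin H (Set.Ici 0) 0 = 0 →
        Filter.Tendsto (fun x : ℝ => H x / x ^ 2) (nhdsWithin 0 (Set.Ioi 0)) (nhds κ) →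
        ∃ δ > 0, ∀ x ∈ Set.Ioo (0:ℝ) δ,
          |H x / (κ * x ^ 2) - 1|
              ≤ C * (κ ^ (-n) * x ^ (3 - 2*n) + κ ^ (-n) * x ^ (4 - 2*n)) ∧
          |deriv H x / (2 * κ * x) - 1|
              ≤ C * (κ ^ (-n) * x ^ (3 - 2*n) + κ ^ (-n) * x ^ (4 - 2*n)) ∧
          |deriv (deriv H) x / (2 * κ) - 1|
              ≤ C * (κ ^ (-n) * x ^ (3 - 2*n) + κ ^ (-n) * x ^ (4 - 2*n)) := by
  have h3 : (0:ℝ) < 3 - 2*n := by linarith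
  have h4 : (1:ℝ) < 4 - 2*n := by linarith
  have h5 : (2:ℝ) < 5 - 2*n := by linarith
  have hp : (-1:ℝ) < 2 - 2*n := by linarith
  set c₀ : ℝ := (2:ℝ) ^ |1 - n| with hc0_def
  have hc0 : 0 < c₀ := Real.rpow_pos_of_pos two_pos _
  refine ⟨c₀ / (3 - 2*n) + 1, by positivity, ?_⟩
  intro H x₀ κ hx₀ hκ hCD hHpos hODE hH0 hH'0 hlim
  have hU : IsOpen (Set.Ioo (0:ℝ) x₀) := isOpen_Ioo
  set H1 := deriv H with hH1def
  set H2 := deriv H1 with hH2def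
  set H3 := deriv H2 with hH3def
  have hCD1 : ContDiffOn ℝ 2 H1 (Set.Ioo 0 x₀) := hCD.deriv_of_isOpen hU (by norm_num)
  have hCD2 : ContDiffOn ℝ 1 H2 (Set.Ioo 0 x₀) := hCD1.deriv_of_isOpen hU (by norm_num)
  have hH3cont : ContinuousOn H3 (Set.Ioo 0 x₀) :=
    (ContDiffOn.deriv_of_isOpen (m := 0) hCD2 hU (by norm_num)).continuousOn
  have hH2cont : ContinuousOn H2 (Set.Ioo 0 x₀) := hCD2.continuousOn
  have hH1cont : ContinuousOn H1 (Set.Ioo 0 x₀) := hCD1.continuousOn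
  have hdH : ∀ x ∈ Set.Ioo (0:ℝ) x₀, HasDerivAt H (H1 x) x := fun x hx =>
    ((hCD.differentiableOn (by norm_num) x hx).differentiableAt (hU.mem_nhds hx)).hasDerivAt
  have hdH1 : ∀ x ∈ Set.Ioo (0:ℝ) x₀, HasDerivAt H1 (H2 x) x := fun x hx =>
    ((hCD1.differentiableOn (by norm_num) x hx).differentiableAt (hU.mem_nhds hx)).hasDerivAt
  have hdH2 : ∀ x ∈ Set.Ioo (0:ℝ) x₀, HasDerivAt H2 (H3 x) x := fun x hx =>
    ((hCD2.differentiableOn (by norm_num) x hx).differentiableAt (hU.mem_nhds hx)).hasDerivAt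
  -- ODE in solved form
  have hODE' : ∀ x ∈ Set.Ioo (0:ℝ) x₀, H3 x = (-1 + x) * (H x) ^ (1 - n) := by
    intro x hx
    have h0 := hODE x hx
    have hHx := hHpos x hx
    have hiter : deriv^[3] H x = H3 x := rfl
    rw [hiter] at h0
    have hne : (H x) ^ (n-1) ≠ 0 := (Real.rpow_pos_of_pos hHx _).ne'
    rw [show (1-n : ℝ) = -(n-1) by ring, Real.rpow_neg hHx.le]
    field_simp
    linarith [h0]
  -- choice of δ₁
  have hev : {x : ℝ | |H x / x^2 - κ| < κ/2} ∈ nhdsWithin 0 (Set.Ioi 0) := by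
    have := Metric.tendsto_nhds.mp hlim (κ/2) (by positivity)
    simp only [Real.dist_eq] at this
    exact this
  obtain ⟨δ₁', hδ₁'pos, hδ₁'sub⟩ := mem_nhdsGT_iff_exists_Ioo_subset.mp hev
  set δ₁ : ℝ := min δ₁' (min x₀ 1) with hδ₁def
  have hδ₁pos : 0 < δ₁ := lt_min hδ₁'pos (lt_min hx₀ one_pos)
  have hδ₁x₀ : δ₁ ≤ x₀ := le_trans (min_le_right _ _) (min_le_left _ _)
  have hδ₁1 : δ₁ ≤ 1 := le_trans (min_le_right _ _) (min_le_right _ _)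
  have hsubU : Set.Ioo (0:ℝ) δ₁ ⊆ Set.Ioo 0 x₀ := fun x hx => ⟨hx.1, lt_of_lt_of_le hx.2 hδ₁x₀⟩
  have hHband : ∀ x ∈ Set.Ioo (0:ℝ) δ₁, κ/2 * x^2 ≤ H x ∧ H x ≤ 2*κ * x^2 := by
    intro x hx
    have hx2 : (0:ℝ) < x^2 := pow_pos hx.1 2
    have h := hδ₁'sub ⟨hx.1, lt_of_lt_of_le hx.2 (min_le_left _ _)⟩
    rw [Set.mem_setOf_eq, abs_lt] at h
    have hlo : κ/2 * x^2 < H x := (lt_div_iff₀ hx2).mp (by linarith)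
    have hhi : H x < 3*κ/2 * x^2 := (div_lt_iff₀ hx2).mp (by linarith)
    exact ⟨hlo.le, by nlinarith⟩
  have hx2pow : ∀ x : ℝ, 0 < x → ((x^2:ℝ)) ^ (1-n) = x ^ (2-2*n) := by
    intro x hx
    rw [← Real.rpow_natCast x 2, ← Real.rpow_mul hx.le]
    congr 1
    push_cast
    ring
  have hH3bound : ∀ x ∈ Set.Ioo (0:ℝ) δ₁, |H3 x| ≤ (c₀ * κ ^ (1-n)) * x ^ (2-2*n) := by
    intro x hx
    have hxU := hsubU hx
    have hpos : 0 < H x := hHpos x hxU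
    have hx0 : 0 < x := hx.1
    have hx1 : x < 1 := lt_of_lt_of_le hx.2 hδ₁1
    have hx2 : (0:ℝ) < x^2 := pow_pos hx0 2
    rw [hODE' x hxU, abs_mul, abs_of_nonneg (Real.rpow_nonneg hpos.le (1-n))]
    have habs1 : |(-1:ℝ) + x| ≤ 1 := by rw [abs_le]; constructor <;> linarith
    have hband := hHband x hx
    have hmain : (H x) ^ (1-n) ≤ (c₀ * κ ^ (1-n)) * x ^ (2-2*n) := by
      rcases le_total n 1 with h | h
      · have h1 : (H x) ^ (1-n) ≤ (2*κ*x^2) ^ (1-n) :=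
          Real.rpow_le_rpow hpos.le hband.2 (by linarith)
        have h2 : ((2*κ*x^2):ℝ) ^ (1-n) = (2*κ) ^ (1-n) * x ^ (2-2*n) := by
          rw [Real.mul_rpow (by positivity) hx2.le, hx2pow x hx0]
        have h3 : ((2*κ):ℝ) ^ (1-n) = 2 ^ (1-n) * κ ^ (1-n) :=
          Real.mul_rpow (by norm_num) hκ.le
        have h4 : (2:ℝ) ^ (1-n) ≤ c₀ :=
          Real.rpow_le_rpow_of_exponent_le one_le_two (le_abs_self _)
        have h5 : 0 < κ ^ (1-n) := Real.rpow_pos_of_pos hκ (1-n)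
        have h6 : 0 ≤ x ^ (2-2*n) := Real.rpow_nonneg hx0.le (2-2*n)
        calc (H x)^(1-n) ≤ (2*κ)^(1-n) * x^(2-2*n) := by rw [← h2]; exact h1
        _ ≤ c₀ * κ^(1-n) * x^(2-2*n) := by
            rw [h3]
            exact mul_le_mul_of_nonneg_right (mul_le_mul_of_nonneg_right h4 h5.le) h6
      · have hb0 : (0:ℝ) < κ/2 * x^2 := by positivity
        have h1 : (H x) ^ (1-n) ≤ (κ/2*x^2) ^ (1-n) :=
          Real.rpow_le_rpow_of_nonpos hb0 hband.1 (by linarith)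
        have h2 : ((κ/2*x^2):ℝ) ^ (1-n) = (κ/2) ^ (1-n) * x ^ (2-2*n) := by
          rw [Real.mul_rpow (by positivity) hx2.le, hx2pow x hx0]
        have h3 : ((κ/2):ℝ) ^ (1-n) = κ ^ (1-n) * 2 ^ (n-1) := by
          rw [div_eq_mul_inv, Real.mul_rpow hκ.le (by norm_num),
            Real.inv_rpow (by norm_num), ← Real.rpow_neg (by norm_num),
            show -(1-n) = n-1 by ring]
        have h4 : (2:ℝ) ^ (n-1) ≤ c₀ := by
          rw [hc0_def, abs_sub_comm]
          exact Real.rpow_le_rpow_of_exponent_le one_le_two (le_abs_self _)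
        have h5 : 0 < κ ^ (1-n) := Real.rpow_pos_of_pos hκ (1-n)
        have h6 : 0 ≤ x ^ (2-2*n) := Real.rpow_nonneg hx0.le (2-2*n)
        calc (H x)^(1-n) ≤ (κ/2)^(1-n) * x^(2-2*n) := by rw [← h2]; exact h1
        _ = 2^(n-1) * κ^(1-n) * x^(2-2*n) := by rw [h3]; ring
        _ ≤ c₀ * κ^(1-n) * x^(2-2*n) := 
            mul_le_mul_of_nonneg_right (mul_le_mul_of_nonneg_right h4 h5.le) h6
    calc |(-1:ℝ)+x| * (H x)^(1-n) ≤ 1 * (H x)^(1-n) :=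
          mul_le_mul_of_nonneg_right habs1 (Real.rpow_nonneg hpos.le (1-n))
    _ = (H x)^(1-n) := one_mul _
    _ ≤ _ := hmain
  -- the base point and constants
  set a : ℝ := δ₁/2 with ha_def
  have ha0 : 0 < a := by positivity
  have haδ₁ : a < δ₁ := by rw [ha_def]; linarith
  have hax₀ : a < x₀ := lt_of_lt_of_le haδ₁ hδ₁x₀
  have hIoc : Set.Ioc (0:ℝ) a ⊆ Set.Ioo 0 δ₁ := fun s hs => ⟨hs.1, lt_of_le_of_lt hs.2 haδ₁⟩
  have hIocU : Set.Ioc (0:ℝ) a ⊆ Set.Ioo 0 x₀ := fun s hs => hsubU (hIoc hs)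
  set M : ℝ := c₀ * κ ^ (1-n) with hM_def
  have hM0 : 0 < M := mul_pos hc0 (Real.rpow_pos_of_pos hκ (1-n))
  set M₁ : ℝ := M / (3-2*n) with hM₁_def
  set M₂ : ℝ := M₁ / (4-2*n) with hM₂_def
  set M₃ : ℝ := M₂ / (5-2*n) with hM₃_def
  have hM₁0 : 0 < M₁ := div_pos hM0 h3
  have hM₂0 : 0 < M₂ := div_pos hM₁0 (by linarith)
  have hM₃0 : 0 < M₃ := div_pos hM₂0 (by linarith)
  -- integrability of H3 up to 0
  have hH3int : ∀ t ∈ Set.Ioc (0:ℝ) a, IntervalIntegrable H3 volume 0 t := by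
    intro t ht
    have htsub : Set.Ioc (0:ℝ) t ⊆ Set.Ioc 0 a := fun s hs => ⟨hs.1, le_trans hs.2 ht.2⟩
    rw [intervalIntegrable_iff_integrableOn_Ioc_of_le ht.1.le]
    have hdom : IntegrableOn (fun s : ℝ => M * s ^ (2-2*n)) (Set.Ioc 0 t) volume := by
      have h := (intervalIntegrable_rpow' hp (a := 0) (b := t)).const_mul M
      rwa [intervalIntegrable_iff_integrableOn_Ioc_of_le ht.1.le] at h
    refine MeasureTheory.Integrable.mono' hdom
      ((hH3cont.mono (fun s hs => hIocU (htsub hs))).aestronglyMeasurable measurableSet_Ioc) ?_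
    exact (ae_restrict_iff' measurableSet_Ioc).mpr (ae_of_all _ fun s hs => by
      simpa [Real.norm_eq_abs] using hH3bound s (hIoc (htsub hs)))
  -- first integration: H2
  set L : ℝ := H2 a - ∫ s in (0:ℝ)..a, H3 s with hL_def
  have hA : ∀ t ∈ Set.Ioc (0:ℝ) a, H2 t = L + ∫ s in (0:ℝ)..t, H3 s :=
    my_ftc_split H2 H3 a x₀ hax₀ hdH2 hH3cont hH3int
  have hAbound : ∀ t ∈ Set.Ioc (0:ℝ) a, |H2 t - L| ≤ M₁ * t ^ (3-2*n) := by
    intro t ht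
    have hb := my_int_bound H3 M (2-2*n) t hp ht.1 hM0.le
      (fun s hs => hH3bound s (hIoc ⟨hs.1, le_trans hs.2 ht.2⟩))
    rw [show (2-2*n) + 1 = 3-2*n by ring] at hb
    have he : H2 t - L = ∫ s in (0:ℝ)..t, H3 s := by rw [hA t ht]; ring
    rw [he]
    calc |∫ s in (0:ℝ)..t, H3 s| ≤ M * t ^ (3-2*n) / (3-2*n) := hb
    _ = M₁ * t ^ (3-2*n) := by rw [hM₁_def]; ring
  -- boundedness and integrability of H2
  set B₂ : ℝ := |L| + M₁ * a ^ (3-2*n) with hB₂_def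
  have hH2bd : ∀ s ∈ Set.Ioc (0:ℝ) a, |H2 s| ≤ B₂ := by
    intro s hs
    have h1 := hAbound s hs
    have h2 : s ^ (3-2*n) ≤ a ^ (3-2*n) := Real.rpow_le_rpow hs.1.le hs.2 h3.le
    have h3' := abs_sub_abs_le_abs_sub (H2 s) L
    nlinarith [hM₁0]
  have hH2int : ∀ t ∈ Set.Ioc (0:ℝ) a, IntervalIntegrable H2 volume 0 t := by
    intro t ht
    have htsub : Set.Ioc (0:ℝ) t ⊆ Set.Ioc 0 a := fun s hs => ⟨hs.1, le_trans hs.2 ht.2⟩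
    rw [intervalIntegrable_iff_integrableOn_Ioc_of_le ht.1.le]
    refine MeasureTheory.Integrable.mono' (g := fun _ => B₂)
      (integrableOn_const measure_Ioc_lt_top.ne)
      ((hH2cont.mono (fun s hs => hIocU (htsub hs))).aestronglyMeasurable measurableSet_Ioc) ?_
    exact (ae_restrict_iff' measurableSet_Ioc).mpr (ae_of_all _ fun s hs => by
      simpa [Real.norm_eq_abs] using hH2bd s (htsub hs))
  -- second integration: H1
  set L' : ℝ := H1 a - ∫ s in (0:ℝ)..a, H2 s with hL'_def
  have hB : ∀ t ∈ Set.Ioc (0:ℝ) a, H1 t = L' + ∫ s in (0:ℝ)..t, H2 s :=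
    my_ftc_split H1 H2 a x₀ hax₀ hdH1 hH2cont hH2int
  have hBbound : ∀ t ∈ Set.Ioc (0:ℝ) a, |H1 t - L' - L*t| ≤ M₂ * t ^ (4-2*n) := by
    intro t ht
    have hb := my_int_bound (fun s => H2 s - L) M₁ (3-2*n) t (by linarith) ht.1 hM₁0.le
      (fun s hs => hAbound s ⟨hs.1, le_trans hs.2 ht.2⟩)
    rw [show (3-2*n) + 1 = 4-2*n by ring] at hb
    have hsubI : (∫ s in (0:ℝ)..t, (H2 s - L)) = (∫ s in (0:ℝ)..t, H2 s) - L * t := by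
      rw [integral_sub (hH2int t ht) intervalIntegrable_const, intervalIntegral.integral_const]
      simp [mul_comm]
    have he : H1 t - L' - L*t = ∫ s in (0:ℝ)..t, (H2 s - L) := by
      rw [hsubI, hB t ht]; ring
    rw [he]
    calc |∫ s in (0:ℝ)..t, (H2 s - L)| ≤ M₁ * t ^ (4-2*n) / (4-2*n) := hb
    _ ≤ M₂ * t ^ (4-2*n) := by rw [hM₂_def]; ring_nf; rfl
  -- boundedness and integrability of H1
  set B₁ : ℝ := |L'| + |L| * a + M₂ * a ^ (4-2*n) with hB₁_def
  have hH1bd : ∀ s ∈ Set.Ioc (0:ℝ) a, |H1 s| ≤ B₁ := by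
    intro s hs
    have h1 := hBbound s hs
    have h2 : s ^ (4-2*n) ≤ a ^ (4-2*n) := Real.rpow_le_rpow hs.1.le hs.2 (by linarith)
    have h3' := abs_sub_abs_le_abs_sub (H1 s) (L' + L*s)
    have h4' : |L' + L*s| ≤ |L'| + |L| * s := by
      calc |L' + L*s| ≤ |L'| + |L*s| := abs_add_le _ _
      _ = |L'| + |L| * s := by rw [abs_mul, abs_of_pos hs.1]
    have h5' : |L| * s ≤ |L| * a := mul_le_mul_of_nonneg_left hs.2 (abs_nonneg L)
    have h6' : |H1 s - (L' + L*s)| = |H1 s - L' - L*s| := by rw [sub_sub]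
    rw [h6'] at h3'
    have h7' := mul_le_mul_of_nonneg_left h2 hM₂0.le
    linarith
  have hH1int : ∀ t ∈ Set.Ioc (0:ℝ) a, IntervalIntegrable H1 volume 0 t := by
    intro t ht
    have htsub : Set.Ioc (0:ℝ) t ⊆ Set.Ioc 0 a := fun s hs => ⟨hs.1, le_trans hs.2 ht.2⟩
    rw [intervalIntegrable_iff_integrableOn_Ioc_of_le ht.1.le]
    refine MeasureTheory.Integrable.mono' (g := fun _ => B₁)
      (integrableOn_const measure_Ioc_lt_top.ne)
      ((hH1cont.mono (fun s hs => hIocU (htsub hs))).aestronglyMeasurable measurableSet_Ioc) ?_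
    exact (ae_restrict_iff' measurableSet_Ioc).mpr (ae_of_all _ fun s hs => by
      simpa [Real.norm_eq_abs] using hH1bd s (htsub hs))
  -- third integration: H
  set c : ℝ := H a - ∫ s in (0:ℝ)..a, H1 s with hc_def
  have hC : ∀ t ∈ Set.Ioc (0:ℝ) a, H t = c + ∫ s in (0:ℝ)..t, H1 s :=
    my_ftc_split H H1 a x₀ hax₀ hdH hH1cont hH1int
  have hCbound : ∀ t ∈ Set.Ioc (0:ℝ) a, |H t - c - L'*t - L*t^2/2| ≤ M₃ * t ^ (5-2*n) := by
    intro t ht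
    have hb := my_int_bound (fun s => H1 s - L' - L*s) M₂ (4-2*n) t (by linarith) ht.1 hM₂0.le
      (fun s hs => hBbound s ⟨hs.1, le_trans hs.2 ht.2⟩)
    rw [show (4-2*n) + 1 = 5-2*n by ring] at hb
    have hlin : IntervalIntegrable (fun s : ℝ => L' + L*s) volume 0 t :=
      (continuous_const.add (continuous_const.mul continuous_id)).intervalIntegrable 0 t
    have hlinval : (∫ s in (0:ℝ)..t, (L' + L*s)) = L'*t + L*t^2/2 := by
      have hmul : IntervalIntegrable (fun s : ℝ => L*s) volume 0 t :=
        (continuous_const.mul continuous_id).intervalIntegrable 0 t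
      rw [integral_add intervalIntegrable_const hmul,
        intervalIntegral.integral_const, intervalIntegral.integral_const_mul, integral_id]
      simp [smul_eq_mul]
      ring
    have hb2 := my_int_bound (fun s => H1 s - (L' + L*s)) M₂ (4-2*n) t (by linarith) ht.1 hM₂0.le
      (fun s hs => by simpa [sub_sub] using hBbound s ⟨hs.1, le_trans hs.2 ht.2⟩)
    rw [show (4-2*n) + 1 = 5-2*n by ring] at hb2
    have hsubI : (∫ s in (0:ℝ)..t, (H1 s - (L' + L*s)))
        = (∫ s in (0:ℝ)..t, H1 s) - (L'*t + L*t^2/2) := by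
      rw [integral_sub (hH1int t ht) hlin, hlinval]
    have he : H t - c - L'*t - L*t^2/2 = ∫ s in (0:ℝ)..t, (H1 s - (L' + L*s)) := by
      rw [hsubI, hC t ht]; ring
    rw [he]
    calc |∫ s in (0:ℝ)..t, (H1 s - (L' + L*s))| ≤ M₂ * t ^ (5-2*n) / (5-2*n) := hb2
    _ ≤ M₃ * t ^ (5-2*n) := by rw [hM₃_def]; ring_nf; rfl
  -- identify the constants via the limit H/x² → κ
  have hmemIoo : Set.Ioo (0:ℝ) a ∈ nhdsWithin 0 (Set.Ioi 0) :=
    Ioo_mem_nhdsGT_of_mem ⟨le_refl 0, ha0⟩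
  have hHto0 : Tendsto H (nhdsWithin 0 (Set.Ioi 0)) (nhds 0) := by
    have hx2 : Tendsto (fun x : ℝ => x^2) (nhdsWithin 0 (Set.Ioi 0)) (nhds 0) := by
      have h := (continuous_pow 2).tendsto (0:ℝ)
      simpa using h.mono_left nhdsWithin_le_nhds
    have h1 := hlim.mul hx2
    rw [mul_zero] at h1
    refine h1.congr' ?_
    filter_upwards [self_mem_nhdsWithin] with x hx
    have hx0 : x ≠ 0 := ne_of_gt hx
    field_simp
  have hcc : c = 0 := by
    have hint : Tendsto (fun t : ℝ => H t - c) (nhdsWithin 0 (Set.Ioi 0)) (nhds 0) := by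
      apply squeeze_zero_norm' (a := fun t : ℝ => B₁ * |t|)
      · filter_upwards [hmemIoo] with t ht
        have he : H t - c = ∫ s in (0:ℝ)..t, H1 s := by
          rw [hC t ⟨ht.1, ht.2.le⟩]; ring
        rw [he]
        have hb := norm_integral_le_of_norm_le_const (C := B₁) (f := H1) (a := 0) (b := t)
          (fun s hs => by
            rw [uIoc_of_le ht.1.le] at hs
            simpa [Real.norm_eq_abs] using hH1bd s ⟨hs.1, le_trans hs.2 ht.2.le⟩)
        simpa using hb
      · have h : Tendsto (fun t : ℝ => B₁ * |t|) (nhds 0) (nhds (B₁ * |(0:ℝ)|)) :=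
          (continuous_const.mul continuous_abs).tendsto 0
        simpa using h.mono_left nhdsWithin_le_nhds
    have h2 : Tendsto H (nhdsWithin 0 (Set.Ioi 0)) (nhds c) := by
      have := hint.add_const c
      simpa using this
    exact (tendsto_nhds_unique h2 hHto0)
  have hrpow_tendsto : Tendsto (fun t : ℝ => t ^ (3-2*n)) (nhdsWithin 0 (Set.Ioi 0)) (nhds 0) := by
    have h := (Real.continuousAt_rpow_const 0 (3-2*n) (Or.inr h3.le)).tendsto
    have h' := h.mono_left (nhdsWithin_le_nhds (s := Set.Ioi (0:ℝ)))
    simpa [Real.zero_rpow h3.ne'] using h'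
  have hsplit52 : ∀ t : ℝ, 0 < t → t ^ (5-2*n) = t ^ (3-2*n) * t^2 := by
    intro t ht
    rw [show (5-2*n:ℝ) = (3-2*n) + 2 by ring, Real.rpow_add ht,
      show ((2:ℝ):ℝ) = ((2:ℕ):ℝ) by norm_num, Real.rpow_natCast]
  have hkey : Tendsto (fun t : ℝ => L' / t) (nhdsWithin 0 (Set.Ioi 0)) (nhds (κ - L/2)) := by
    have herr : Tendsto (fun t : ℝ => (H t - c - L'*t - L*t^2/2)/t^2)
        (nhdsWithin 0 (Set.Ioi 0)) (nhds 0) := by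
      apply squeeze_zero_norm' (a := fun t : ℝ => M₃ * t ^ (3-2*n))
      · filter_upwards [hmemIoo] with t ht
        have hb := hCbound t ⟨ht.1, ht.2.le⟩
        have ht2 : (0:ℝ) < t^2 := pow_pos ht.1 2
        rw [Real.norm_eq_abs, abs_div, abs_of_pos ht2, div_le_iff₀ ht2]
        calc |H t - c - L'*t - L*t^2/2| ≤ M₃ * t ^ (5-2*n) := hb
        _ = M₃ * t ^ (3-2*n) * t^2 := by rw [hsplit52 t ht.1]; ring
      · have := hrpow_tendsto.const_mul M₃
        simpa using this
    have hmain := (hlim.sub (tendsto_const_nhds (x := L/2))).sub herr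
    rw [sub_zero] at hmain
    refine hmain.congr' ?_
    filter_upwards [hmemIoo] with t ht
    have ht0 : t ≠ 0 := ne_of_gt ht.1
    rw [hcc]
    field_simp
    ring
  clear_value L L' c
  have hL'0 : L' = 0 := by
    by_contra hne
    have h1 : Tendsto (fun t : ℝ => t⁻¹) (nhdsWithin 0 (Set.Ioi 0)) atTop :=
      tendsto_inv_nhdsGT_zero
    have h2 : Tendsto (fun t : ℝ => t⁻¹) (nhdsWithin 0 (Set.Ioi 0))
        (nhds ((κ - L/2) * L'⁻¹)) := by
      refine (hkey.mul_const L'⁻¹).congr fun t => ?_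
      calc L'/t * L'⁻¹ = (L'⁻¹ * L') * t⁻¹ := by rw [div_eq_mul_inv]; ring
      _ = t⁻¹ := by rw [inv_mul_cancel₀ hne, one_mul]
    exact not_tendsto_nhds_of_tendsto_atTop h1 _ h2
  have hL2 : L = 2*κ := by
    have h0 : Tendsto (fun t : ℝ => L'/t) (nhdsWithin 0 (Set.Ioi 0)) (nhds 0) := by
      simp only [hL'0, zero_div]
      exact tendsto_const_nhds
    have hu := tendsto_nhds_unique hkey h0
    linear_combination (-2 : ℝ) * hu
  -- final assembly
  refine ⟨a, ha0, ?_⟩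
  intro x hx
  have hx0 : 0 < x := hx.1
  have hxIoc : x ∈ Set.Ioc (0:ℝ) a := ⟨hx.1, hx.2.le⟩
  have hb2 := hAbound x hxIoc
  have hb1 := hBbound x hxIoc
  have hb0 := hCbound x hxIoc
  rw [hL2] at hb2 hb1 hb0
  rw [hL'0] at hb1 hb0
  rw [hcc] at hb0
  have hκ1n : κ ^ (1-n) = κ ^ (-n) * κ := by
    rw [show (1-n:ℝ) = -n + 1 by ring, Real.rpow_add hκ, Real.rpow_one]
  have hA0 : 0 ≤ κ^(-n) * x^(3-2*n) :=
    mul_nonneg (Real.rpow_nonneg hκ.le _) (Real.rpow_nonneg hx0.le _)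
  have hB0 : 0 ≤ κ^(-n) * x^(4-2*n) :=
    mul_nonneg (Real.rpow_nonneg hκ.le _) (Real.rpow_nonneg hx0.le _)
  have hx34 : x^(4-2*n) = x^(3-2*n) * x := by
    rw [show (4-2*n:ℝ) = (3-2*n) + 1 by ring, Real.rpow_add hx0, Real.rpow_one]
  have hx35 : x^(5-2*n) = x^(3-2*n) * x^2 := hsplit52 x hx0
  have hD : 0 < c₀/(3-2*n) := by positivity
  have hcore : M₁ * x^(3-2*n)
      ≤ (c₀/(3-2*n)+1) * (κ^(-n)*x^(3-2*n) + κ^(-n)*x^(4-2*n)) * κ := by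
    have h1 : M₁ * x^(3-2*n) = (c₀/(3-2*n)) * (κ^(-n) * x^(3-2*n)) * κ := by
      rw [hM₁_def, hM_def, hκ1n]; ring
    rw [h1]
    refine mul_le_mul_of_nonneg_right (mul_le_mul (by linarith only [hD])
      (by linarith only [hB0]) hA0 (by linarith only [hD])) hκ.le
  have hC0 : 0 ≤ (c₀/(3-2*n)+1) * (κ^(-n)*x^(3-2*n) + κ^(-n)*x^(4-2*n)) :=
    mul_nonneg (by linarith only [hD]) (by linarith only [hA0, hB0])
  have hM₂₁ : M₂ ≤ M₁ := by
    rw [hM₂_def]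
    exact div_le_self hM₁0.le (by linarith only [h4])
  have hM₃₁ : M₃ ≤ M₁ := by
    rw [hM₃_def]
    exact le_trans (div_le_self (by rw [hM₂_def]; positivity) (by linarith only [h5])) hM₂₁
  refine ⟨?_, ?_, ?_⟩
  · apply my_div_bound _ _ _ (mul_pos hκ (pow_pos hx0 2))
    have he : H x - κ*x^2 = H x - 0 - 0*x - 2*κ*x^2/2 := by ring
    rw [he]
    refine le_trans hb0 ?_
    calc M₃ * x^(5-2*n) = M₃ * x^(3-2*n) * x^2 := by rw [hx35]; ring
    _ ≤ M₁ * x^(3-2*n) * x^2 := by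
        have := mul_le_mul_of_nonneg_right
          (mul_le_mul_of_nonneg_right hM₃₁ (Real.rpow_nonneg hx0.le (3-2*n)))
          (sq_nonneg x)
        exact this
    _ ≤ (c₀/(3-2*n)+1) * (κ^(-n)*x^(3-2*n) + κ^(-n)*x^(4-2*n)) * κ * x^2 :=
        mul_le_mul_of_nonneg_right hcore (sq_nonneg x)
    _ = (c₀/(3-2*n)+1) * (κ^(-n)*x^(3-2*n) + κ^(-n)*x^(4-2*n)) * (κ * x^2) := by ring
  · apply my_div_bound _ _ _ (by positivity)
    have he : H1 x - 2*κ*x = H1 x - 0 - 2*κ*x := by ring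
    rw [he]
    refine le_trans hb1 ?_
    calc M₂ * x^(4-2*n) = M₂ * x^(3-2*n) * x := by rw [hx34]; ring
    _ ≤ M₁ * x^(3-2*n) * x :=
        mul_le_mul_of_nonneg_right
          (mul_le_mul_of_nonneg_right hM₂₁ (Real.rpow_nonneg hx0.le (3-2*n))) hx0.le
    _ ≤ (c₀/(3-2*n)+1) * (κ^(-n)*x^(3-2*n) + κ^(-n)*x^(4-2*n)) * κ * x :=
        mul_le_mul_of_nonneg_right hcore hx0.le
    _ = ((c₀/(3-2*n)+1) * (κ^(-n)*x^(3-2*n) + κ^(-n)*x^(4-2*n))) * (κ*x) := by ring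
    _ ≤ ((c₀/(3-2*n)+1) * (κ^(-n)*x^(3-2*n) + κ^(-n)*x^(4-2*n))) * (2*(κ*x)) :=
        mul_le_mul_of_nonneg_left (by linarith only [mul_pos hκ hx0]) hC0
    _ = (c₀/(3-2*n)+1) * (κ^(-n)*x^(3-2*n) + κ^(-n)*x^(4-2*n)) * (2*κ*x) := by ring
  · apply my_div_bound _ _ _ (by positivity)
    refine le_trans hb2 ?_
    calc M₁ * x^(3-2*n)
        ≤ (c₀/(3-2*n)+1) * (κ^(-n)*x^(3-2*n) + κ^(-n)*x^(4-2*n)) * κ := hcore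
    _ ≤ (c₀/(3-2*n)+1) * (κ^(-n)*x^(3-2*n) + κ^(-n)*x^(4-2*n)) * (2*κ) := by
        rw [show (c₀/(3-2*n)+1) * (κ^(-n)*x^(3-2*n) + κ^(-n)*x^(4-2*n)) * (2*κ)
          = ((c₀/(3-2*n)+1) * (κ^(-n)*x^(3-2*n) + κ^(-n)*x^(4-2*n))) * (2*κ) from by ring]
        exact mul_le_mul_of_nonneg_left (by linarith only [hκ]) hC0
end
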